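/- arXiv:2102.09730 — 4 statements merged into one kernel-verified Lean document; each statement's English description precedes it below -/
import Mathlib

section
/- Let α > 0 be a real number, let a, b be natural numbers with α·b ≤ a, and let x, y be integers with a + x ≥ 0 and a + b + x + y ≥ 0. Then binom(a+b+x+y, a+x) ≤ ((α+1)^{x+y}/α^x) · ((α+1)·e/α)^a, where (α+1)^{x+y} and α^x are integer powers of positive reals and the binomial coefficient is the usual one on the corresponding natural numbers. -/
lemma choose_le_pow_div (α : ℝ) (hα : 0 < α) (n k : ℕ) (hkn : k ≤ n) :
    (n.choose k : ℝ) ≤ (α + 1) ^ n / α ^ k := by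
  rw [le_div_iff₀ (by positivity)]
  calc (n.choose k : ℝ) * α ^ k
      = α ^ k * 1 ^ (n - k) * (n.choose k : ℝ) := by ring
    _ ≤ ∑ i ∈ Finset.range (n + 1), α ^ i * 1 ^ (n - i) * (n.choose i : ℝ) := by
        apply Finset.single_le_sum (f := fun i => α ^ i * 1 ^ (n - i) * (n.choose i : ℝ))
        · intro i _
          positivity
        · exact Finset.mem_range.2 (Nat.lt_succ_of_le hkn)
    _ = (α + 1) ^ n := (add_pow α 1 n).symm

/-- **Sawin, Lemma 7.1 (`binomial-bound`)**: for `α > 0`, naturals `a, b` with `α·b ≤ a`,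
and integers `x, y` (with the entries of the binomial coefficient nonnegative),
`C(a+b+x+y, a+x) ≤ (α+1)^{x+y}/α^x · ((α+1)e/α)^a`. -/
theorem binomial_exponential_bound
    (α : ℝ) (hα : 0 < α) (a b : ℕ) (hab : α * (b : ℝ) ≤ (a : ℝ))
    (x y : ℤ) (hx : 0 ≤ (a : ℤ) + x) (hxy : 0 ≤ (a : ℤ) + (b : ℤ) + x + y) :
    (Nat.choose ((a : ℤ) + (b : ℤ) + x + y).toNat ((a : ℤ) + x).toNat : ℝ) ≤
      (α + 1) ^ (x + y) / α ^ x * ((α + 1) * Real.exp 1 / α) ^ a := by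
  set n := ((a : ℤ) + (b : ℤ) + x + y).toNat with hn
  set k := ((a : ℤ) + x).toNat with hk
  have hαne : α ≠ 0 := hα.ne'
  have hpos1 : (0:ℝ) < α + 1 := by linarith
  have hne1 : α + 1 ≠ 0 := hpos1.ne'
  by_cases hkn : k ≤ n
  · have key : (n.choose k : ℝ) ≤ (α + 1) ^ n / α ^ k := choose_le_pow_div α hα n k hkn
    have hnz : (n : ℤ) = (a : ℤ) + b + x + y := Int.toNat_of_nonneg hxy
    have hkz : (k : ℤ) = (a : ℤ) + x := Int.toNat_of_nonneg hx
    have e1 : (α + 1) ^ n = (α + 1) ^ (x + y) * (α + 1) ^ a * (α + 1) ^ b := by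
      rw [← zpow_natCast (α + 1) n, hnz,
        show (a : ℤ) + b + x + y = (x + y) + (a : ℤ) + (b : ℤ) by ring,
        zpow_add₀ hne1, zpow_add₀ hne1, zpow_natCast, zpow_natCast]
    have e2 : α ^ k = α ^ x * α ^ a := by
      rw [← zpow_natCast α k, hkz, zpow_add₀ hαne, zpow_natCast, mul_comm]
    have hb : (α + 1) ^ b ≤ Real.exp 1 ^ a := by
      calc (α + 1) ^ b ≤ Real.exp α ^ b :=
            pow_le_pow_left₀ (by positivity) (Real.add_one_le_exp α) b
        _ = Real.exp (α * b) := by rw [mul_comm, Real.exp_nat_mul]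
        _ ≤ Real.exp a := Real.exp_le_exp.2 hab
        _ = Real.exp 1 ^ a := by rw [← Real.exp_nat_mul, mul_one]
    calc (n.choose k : ℝ) ≤ (α + 1) ^ n / α ^ k := key
      _ = (α + 1) ^ (x + y) / α ^ x * ((α + 1) ^ a * (α + 1) ^ b / α ^ a) := by
          rw [e1, e2]; ring
      _ ≤ (α + 1) ^ (x + y) / α ^ x * ((α + 1) ^ a * Real.exp 1 ^ a / α ^ a) := by
          gcongr
      _ = (α + 1) ^ (x + y) / α ^ x * ((α + 1) * Real.exp 1 / α) ^ a := by
          rw [div_pow, mul_pow]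
  · rw [Nat.choose_eq_zero_of_lt (lt_of_not_ge hkn)]
    push_cast
    positivity
end

section
/- Let H ≥ 0 and 0 ≤ y ≤ 1 be real numbers, and set H̃ = −(1−y)·log(1−y) − y·log(y) + y·H (with the convention that log 0 = 0, so terms of the form 0·log 0 vanish). Then: (i) exp(H̃) ≤ exp(H) + 1; (ii) if y ≤ 1 − e^{1−H} then exp(H̃) ≤ exp(H); (iii) if y ≤ 1 − 4·e^{−H} then exp(H̃) ≤ exp(H) − 1. -/
private lemma aux_gibbs (a b : ℝ) (ha : 0 ≤ a) (hb : 0 < b) :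
    a * Real.log b - a * Real.log a ≤ b - a := by
  rcases eq_or_lt_of_le ha with h | h
  · simp [← h]; linarith
  · have h1 : Real.log (b / a) ≤ b / a - 1 := Real.log_le_sub_one_of_pos (by positivity)
    rw [Real.log_div hb.ne' h.ne'] at h1
    have h2 := mul_le_mul_of_nonneg_left h1 h.le
    have h3 : a * (b / a) = b := by field_simp
    nlinarith

/-- **Sawin, Lemma 8.1 (`entropy-increase-bound`)**: for `H ≥ 0` and `0 ≤ y ≤ 1`, setting
`H̃ = -(1-y)·log(1-y) - y·log y + y·H` (with `log 0 = 0`), we have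
`exp H̃ ≤ exp H + 1`; moreover `exp H̃ ≤ exp H` if `y ≤ 1 - e^{1-H}`, and
`exp H̃ ≤ exp H - 1` if `y ≤ 1 - 4 e^{-H}`. -/
theorem entropy_increase_bound
    (H y : ℝ) (hH : 0 ≤ H) (hy0 : 0 ≤ y) (hy1 : y ≤ 1)
    (Ht : ℝ) (hHt : Ht = -(1 - y) * Real.log (1 - y) - y * Real.log y + y * H) :
    Real.exp Ht ≤ Real.exp H + 1 ∧
    (y ≤ 1 - Real.exp (1 - H) → Real.exp Ht ≤ Real.exp H) ∧
    (y ≤ 1 - 4 * Real.exp (-H) → Real.exp Ht ≤ Real.exp H - 1) := by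
  have hbase : ∀ a : ℝ, 0 ≤ a → -(a * Real.log a) ≤ 1 - a := by
    intro a ha
    have := aux_gibbs a 1 ha one_pos
    simpa using this
  refine ⟨?_, ?_, ?_⟩
  · -- Part (i)
    set E := Real.exp H + 1 with hE
    have hEpos : 0 < E := by positivity
    have h1 : y * Real.log (Real.exp H / E) - y * Real.log y ≤ Real.exp H / E - y :=
      aux_gibbs y _ hy0 (by positivity)
    have h2 : (1 - y) * Real.log (1 / E) - (1 - y) * Real.log (1 - y)
        ≤ 1 / E - (1 - y) := aux_gibbs (1 - y) _ (by linarith) (by positivity)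
    rw [Real.log_div (Real.exp_pos H).ne' hEpos.ne', Real.log_exp] at h1
    rw [Real.log_div one_ne_zero hEpos.ne', Real.log_one] at h2
    have hsum : Real.exp H / E + 1 / E = 1 := by field_simp; exact hE.symm
    have hHt' : Ht ≤ Real.log E := by rw [hHt]; nlinarith
    calc Real.exp Ht ≤ Real.exp (Real.log E) := Real.exp_le_exp.2 hHt'
      _ = E := Real.exp_log hEpos
  · -- Part (ii)
    intro hcond
    have ht : Real.exp (1 - H) ≤ 1 - y := by linarith
    have htpos : 0 < 1 - y := lt_of_lt_of_le (Real.exp_pos _) ht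
    have hlog : 1 - H ≤ Real.log (1 - y) := (Real.le_log_iff_exp_le htpos).2 ht
    have hy' : -(y * Real.log y) ≤ 1 - y := hbase y hy0
    have hfin : Ht ≤ H := by
      rw [hHt]
      nlinarith [mul_le_mul_of_nonneg_left hlog htpos.le]
    exact Real.exp_le_exp.2 hfin
  · -- Part (iii)
    intro hcond
    set ε := Real.exp (-H) with hε
    have hεpos : 0 < ε := Real.exp_pos _
    have h4ε : 4 * ε ≤ 1 - y := by linarith
    have htpos : 0 < 1 - y := by linarith
    have hε14 : ε ≤ 1 / 4 := by linarith
    have h1ε : 0 < 1 - ε := by linarith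
    -- log(1-ε) ≥ -(1-y)/3
    have hlog1ε : -((1 - y) / 3) ≤ Real.log (1 - ε) := by
      have h := Real.log_le_sub_one_of_pos (show (0:ℝ) < 1 / (1 - ε) by positivity)
      rw [Real.log_div one_ne_zero h1ε.ne', Real.log_one] at h
      -- h : 0 - log(1-ε) ≤ 1/(1-ε) - 1
      have h2 : 1 / (1 - ε) - 1 ≤ (1 - y) / 3 := by
        rw [div_sub_one h1ε.ne', div_le_div_iff₀ h1ε (by norm_num)]
        nlinarith
      linarith
    -- H ≥ log 4 - log(1-y)
    have hH4 : Real.log 4 - Real.log (1 - y) ≤ H := by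
      have hle : ε ≤ (1 - y) / 4 := by linarith
      have := Real.log_le_log hεpos hle
      rw [hε, Real.log_exp, Real.log_div htpos.ne' (by norm_num)] at this
      linarith
    -- log 4 ≥ 4/3
    have hlog4 : (4:ℝ)/3 ≤ Real.log 4 := by
      have h2 : Real.log 4 = 2 * Real.log 2 := by
        rw [show (4:ℝ) = 2 ^ 2 by norm_num, Real.log_pow]; push_cast; ring
      have := Real.log_two_gt_d9
      rw [h2]; linarith
    have hy' : -(y * Real.log y) ≤ 1 - y := hbase y hy0
    have hfin : Ht ≤ H + Real.log (1 - ε) := by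
      rw [hHt]
      nlinarith [mul_le_mul_of_nonneg_left hH4 htpos.le,
        mul_le_mul_of_nonneg_left hlog4 htpos.le]
    calc Real.exp Ht ≤ Real.exp (H + Real.log (1 - ε)) := Real.exp_le_exp.2 hfin
      _ = Real.exp H * (1 - ε) := by rw [Real.exp_add, Real.exp_log h1ε]
      _ = Real.exp H - 1 := by
          rw [hε, Real.exp_neg]
          field_simp
end

section
/- For each integer N ≥ 4, let π(N) = (1/((4+e)·e^{4+e})) · N·e^N/(N−4)!. Then for every integer C ≥ 8, Σ_{N=C}^∞ π(N) ≤ (1/((4+e)·e^{4+e})) · C^5·e^C/C!. -/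
/-- The stationary distribution `π(N) = N e^N / ((4+e) e^{4+e} (N-4)!)` of the comparison
Markov chain. -/
noncomputable def markovPi (N : ℕ) : ℝ :=
  (1 / ((4 + Real.exp 1) * Real.exp (4 + Real.exp 1)))
    * ((N : ℝ) * Real.exp N / (Nat.factorial (N - 4) : ℝ))

noncomputable def auxA (N : ℕ) : ℝ :=
  (N : ℝ) * Real.exp N / (Nat.factorial (N - 4) : ℝ)

noncomputable def tailT (N : ℕ) : ℝ :=
  (N : ℝ) ^ 5 * Real.exp N / (Nat.factorial N : ℝ)

lemma tailT_nonneg (N : ℕ) : 0 ≤ tailT N := by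
  unfold tailT; positivity

lemma key (N : ℕ) (hN : 8 ≤ N) : auxA N + tailT (N + 1) ≤ tailT N := by
  obtain ⟨m, rfl⟩ := Nat.exists_eq_add_of_le hN
  unfold auxA tailT
  have hsub : 8 + m - 4 = m + 4 := by omega
  have hfac8 : (Nat.factorial (8 + m) : ℝ)
      = (Nat.factorial (m + 4) : ℝ) * ((m+5) * (m+6) * (m+7) * (m+8)) := by
    have : 8 + m = (m + 4) + 4 := by omega
    rw [this]
    simp [Nat.factorial_succ]
    push_cast
    ring
  have hfac9 : (Nat.factorial (8 + m + 1) : ℝ)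
      = (Nat.factorial (8 + m) : ℝ) * ((m : ℝ) + 9) := by
    rw [Nat.factorial_succ]
    push_cast
    ring
  have hexp9 : Real.exp ((8 + m + 1 : ℕ) : ℝ)
      = Real.exp 1 * Real.exp ((8 + m : ℕ) : ℝ) := by
    rw [← Real.exp_add]
    push_cast
    ring_nf
  have hF : (0:ℝ) < (Nat.factorial (m + 4) : ℝ) := by positivity
  have hE : (0:ℝ) < Real.exp ((8 + m : ℕ) : ℝ) := Real.exp_pos _
  have he : Real.exp 1 < 2.7182818286 := Real.exp_one_lt_d9
  have hepos : (0:ℝ) < Real.exp 1 := Real.exp_pos 1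
  rw [hsub, hexp9, hfac9, hfac8]
  set E := Real.exp ((8 + m : ℕ) : ℝ) with hEdef
  set F := (Nat.factorial (m + 4) : ℝ) with hFdef
  set e1 := Real.exp 1 with he1
  have hm : (0:ℝ) ≤ (m : ℝ) := Nat.cast_nonneg m
  push_cast
  set P := ((m:ℝ)+5) * ((m:ℝ)+6) * ((m:ℝ)+7) * ((m:ℝ)+8) with hPdef
  have hP : (0:ℝ) < P := by rw [hPdef]; positivity
  have hkey : e1 * ((m:ℝ)+9)^4 ≤ 6*((m:ℝ)+8)^4 - 11*((m:ℝ)+8)^3 + 6*((m:ℝ)+8)^2 := by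
    nlinarith [pow_nonneg hm 4, pow_nonneg hm 3, pow_nonneg hm 2, sq_nonneg ((m:ℝ)),
      mul_nonneg hm hm, mul_nonneg (mul_nonneg hm hm) hm,
      mul_nonneg (mul_nonneg (mul_nonneg hm hm) hm) hm]
  have goal2 : ((m:ℝ)+8) * P + e1 * ((m:ℝ)+9)^4 ≤ ((m:ℝ)+8)^5 := by nlinarith [hkey]
  have hmul := mul_le_mul_of_nonneg_left goal2
    (show (0:ℝ) ≤ F * F * P * E * ((m:ℝ)+9) by positivity)
  rw [div_add_div _ _ (by positivity) (by positivity),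
    div_le_div_iff₀ (by positivity) (by positivity)]
  nlinarith [hmul]

lemma sum_le (C : ℕ) (hC : 8 ≤ C) (n : ℕ) :
    ∑ N ∈ Finset.range n, (if C ≤ N then auxA N else 0)
      ≤ tailT C - tailT (max n C) := by
  induction n with
  | zero => simp
  | succ n ih =>
    rw [Finset.sum_range_succ]
    by_cases h : C ≤ n
    · rw [if_pos h, max_eq_left h, max_eq_left (le_trans h (Nat.le_succ n))] at *
      have := key n (le_trans hC h)
      linarith
    · rw [if_neg h]
      have h1 : max n C = C := max_eq_right (le_of_not_ge h)
      have h2 : max (n+1) C = C := max_eq_right (by omega)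
      rw [h1] at ih
      rw [h2]
      linarith

/-- **Sawin, Lemma 8.4 (`summation-bound`)**: for `C ≥ 8`, the tail sum
`Σ_{N ≥ C} π(N)` is at most `C⁵ e^C / ((4+e) e^{4+e} C!)`. -/
theorem markovPi_tail_bound (C : ℕ) (hC : 8 ≤ C) :
    (∑' N : ℕ, if C ≤ N then markovPi N else 0) ≤
      (1 / ((4 + Real.exp 1) * Real.exp (4 + Real.exp 1)))
        * ((C : ℝ) ^ 5 * Real.exp C / (Nat.factorial C : ℝ)) := by
  set c := (1 / ((4 + Real.exp 1) * Real.exp (4 + Real.exp 1))) with hc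
  have hcpos : 0 ≤ c := by
    rw [hc]
    have := Real.exp_pos 1
    have := Real.exp_pos (4 + Real.exp 1)
    positivity
  have h1 : ∀ N : ℕ, (if C ≤ N then markovPi N else 0)
      = c * (if C ≤ N then auxA N else 0) := by
    intro N
    by_cases h : C ≤ N <;> simp [markovPi, auxA, h, hc]
  rw [tsum_congr h1, tsum_mul_left]
  have htsum : (∑' N : ℕ, (if C ≤ N then auxA N else 0)) ≤ tailT C := by
    apply Real.tsum_le_of_sum_range_le
    · intro N
      by_cases h : C ≤ N <;> simp [h, auxA]
      positivity
    · intro n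
      have := sum_le C hC n
      have := tailT_nonneg (max n C)
      linarith
  calc c * (∑' N : ℕ, (if C ≤ N then auxA N else 0)) ≤ c * tailT C :=
        mul_le_mul_of_nonneg_left htsum hcpos
    _ = c * ((C : ℝ) ^ 5 * Real.exp C / (Nat.factorial C : ℝ)) := by rw [tailT]
end

section
/- Let s be a nonempty finite index set, let (n_i)_{i∈s} be positive integers, and set d = Σ_{i∈s} n_i. Then (card s)! · (Π_{i∈s} n_i) · (Π_{i∈s} n_i!) ≤ (max_{i∈s} n_i) · d!; equivalently, (card s)! · (Π_{i∈s} n_i)/(max_{i∈s} n_i) ≤ d!/(Π_{i∈s} n_i!). -/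
private lemma pow_fact_aux (c : ℕ) (hc : 1 ≤ c) :
    ∀ m d' : ℕ, c * m ≤ d' + m → c ^ m * m.factorial * d'.factorial ≤ (d' + m).factorial := by
  intro m
  induction m with
  | zero => intro d' _; simp
  | succ m ih =>
    intro d' h
    have hmul : c * (m + 1) = c * m + c := Nat.mul_succ c m
    have h1 : c * m ≤ d' + m := by omega
    have ih' := ih d' h1
    calc c ^ (m+1) * (m+1).factorial * d'.factorial
        = (c * (m+1)) * (c ^ m * m.factorial * d'.factorial) := by
          rw [pow_succ, Nat.factorial_succ]; ring
      _ ≤ (d' + (m+1)) * (d' + m).factorial := Nat.mul_le_mul h ih'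
      _ = (d' + (m+1)).factorial := (Nat.factorial_succ (d'+m)).symm

private lemma step_fact (c m d' : ℕ) (hc : 2 ≤ c) (hm : 1 ≤ m) (h : c * m ≤ d' + m) :
    c * m * m.factorial * d'.factorial ≤ (d' + m).factorial := by
  have h1 : m ≤ 2 ^ (m - 1) := by
    have := Nat.lt_two_pow_self (n := m - 1); omega
  have h2 : (2:ℕ) ^ (m-1) ≤ c ^ (m-1) := Nat.pow_le_pow_left hc _
  have h3 : c * m ≤ c ^ m := by
    calc c * m ≤ c * c ^ (m-1) := Nat.mul_le_mul_left c (h1.trans h2)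
      _ = c ^ m := by rw [← pow_succ']; congr 1; omega
  exact le_trans (Nat.mul_le_mul_right _ (Nat.mul_le_mul_right _ h3)) (pow_fact_aux c (by omega) m d' h)

private lemma main_aux {ι : Type*} (n : ι → ℕ) :
    ∀ N : ℕ, ∀ s : Finset ι, s.card = N → ∀ hs : s.Nonempty, (∀ i ∈ s, 0 < n i) →
      Nat.factorial s.card * (∏ i ∈ s, n i) * (∏ i ∈ s, Nat.factorial (n i)) ≤
        s.sup' hs n * Nat.factorial (∑ i ∈ s, n i) := by
  intro N
  induction N with
  | zero =>
    intro s hcard hs _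
    have := Finset.card_pos.mpr hs; omega
  | succ N ih =>
    intro s hcard hs hn
    classical
    rcases Nat.eq_zero_or_pos N with hN | hN
    · subst hN
      obtain ⟨a, rfl⟩ := Finset.card_eq_one.mp hcard
      simp [Nat.factorial]
    · obtain ⟨k, hk, hmin⟩ := Finset.exists_min_image s n hs
      have htcard : (s.erase k).card = N := by
        rw [Finset.card_erase_of_mem hk, hcard]; rfl
      have htne : (s.erase k).Nonempty := Finset.card_pos.mp (by omega)
      have htn : ∀ i ∈ s.erase k, 0 < n i := fun i hi => hn i (Finset.mem_of_mem_erase hi)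
      have IH := ih (s.erase k) htcard htne htn
      rw [htcard] at IH
      have hsup : (s.erase k).sup' htne n ≤ s.sup' hs n :=
        Finset.sup'_le _ _ fun i hi => Finset.le_sup' n (Finset.mem_of_mem_erase hi)
      have hd' : N * n k ≤ ∑ i ∈ s.erase k, n i := by
        have := Finset.card_nsmul_le_sum (s.erase k) n (n k)
          (fun i hi => hmin i (Finset.mem_of_mem_erase hi))
        simpa [htcard, smul_eq_mul] using this
      have hnk : 1 ≤ n k := hn k hk
      have hmul : (N + 1) * n k = N * n k + n k := Nat.succ_mul N (n k)
      have hkey : (N+1) * n k * (n k).factorial * (∑ i ∈ s.erase k, n i).factorial ≤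
          ((∑ i ∈ s.erase k, n i) + n k).factorial :=
        step_fact (N+1) (n k) _ (by omega) hnk (by omega)
      rw [hcard, ← Finset.mul_prod_erase s n hk,
        ← Finset.mul_prod_erase s (fun i => (n i).factorial) hk,
        ← Finset.add_sum_erase s n hk]
      calc Nat.factorial (N+1) * (n k * ∏ i ∈ s.erase k, n i) *
            ((n k).factorial * ∏ i ∈ s.erase k, (n i).factorial)
          = ((N+1) * n k * (n k).factorial) *
            (Nat.factorial N * (∏ i ∈ s.erase k, n i) * (∏ i ∈ s.erase k, (n i).factorial)) := by
            rw [Nat.factorial_succ]; ring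
        _ ≤ ((N+1) * n k * (n k).factorial) *
            ((s.erase k).sup' htne n * Nat.factorial (∑ i ∈ s.erase k, n i)) :=
            Nat.mul_le_mul_left _ IH
        _ = (s.erase k).sup' htne n *
            ((N+1) * n k * (n k).factorial * Nat.factorial (∑ i ∈ s.erase k, n i)) := by ring
        _ ≤ s.sup' hs n * Nat.factorial (n k + ∑ i ∈ s.erase k, n i) := by
            refine Nat.mul_le_mul hsup ?_
            rw [Nat.add_comm (n k)]
            exact hkey

/-- **Sawin, combinatorial inequality from Lemma 10.7 (`sieve-combinatorial-bound`)**: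
for a nonempty finite index set `s` and positive integers `(n_i)_{i ∈ s}` with sum `d`,
`(card s)! · (Π n_i) · (Π n_i!) ≤ (max_{i ∈ s} n_i) · d!`. -/
theorem factorial_partition_bound {ι : Type*} (s : Finset ι) (hs : s.Nonempty)
    (n : ι → ℕ) (hn : ∀ i ∈ s, 0 < n i) :
    Nat.factorial s.card * (∏ i ∈ s, n i) * (∏ i ∈ s, Nat.factorial (n i)) ≤
      s.sup' hs n * Nat.factorial (∑ i ∈ s, n i) := by
  exact main_aux n s.card s rfl hs hn
end
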